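/- arXiv:1007.5344 — 2 statements merged into one kernel-verified Lean document; each statement's English description precedes it below -/
import Mathlib

section
/- Let k ≥ 1 and n = 2k + 1. If c is a radio labeling of C_n □ C_n, then for any three vertices u, v, w of C_n □ C_n with c(u) < c(v) < c(w), one has c(w) − c(u) ≥ k + 1. -/
open SimpleGraph

/-- `c` is a radio labeling of `G`: labels are positive integers and for every two
distinct vertices `u, v` we have `d(u,v) + |c(u) - c(v)| ≥ 1 + diam(G)`. -/
def IsRadioLabeling {V : Type*} (G : SimpleGraph V) (c : V → ℕ) : Prop :=
  (∀ v, 1 ≤ c v) ∧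
    ∀ u v : V, u ≠ v → G.diam + 1 ≤ G.dist u v + Nat.dist (c u) (c v)

/-- The span of a labeling: the maximum label used. -/
def labelSpan {V : Type*} [Fintype V] (c : V → ℕ) : ℕ := Finset.univ.sup c

/-- The radio number of `G`: the minimum span over all radio labelings. -/
noncomputable def radioNumber {V : Type*} [Fintype V] (G : SimpleGraph V) : ℕ :=
  sInf {s | ∃ c : V → ℕ, IsRadioLabeling G c ∧ labelSpan c = s}

lemma sub_val' {n : ℕ} (x y : Fin (n+2)) :
    (x - y).val = if y.val ≤ x.val then x.val - y.val else n + 2 - (y.val - x.val) := by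
  rw [Fin.sub_def]
  have hx := x.isLt; have hy := y.isLt
  split_ifs with h
  · have e : (n + 2) - y.val + x.val = (n+2) + (x.val - y.val) := by omega
    simp only [e, Nat.add_mod_left]
    exact Nat.mod_eq_of_lt (by omega)
  · have hlt : (n + 2) - y.val + x.val < n + 2 := by omega
    simp only [Nat.mod_eq_of_lt hlt]
    omega

lemma cycle_walk_lower {n : ℕ} {x y : Fin (n+2)} (p : (cycleGraph (n+2)).Walk x y) :
    min (y - x).val (x - y).val ≤ p.length := by
  induction p with
  | nil => simp
  | @cons a b r h q ih =>
    have hadj := cycleGraph_adj'.mp h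
    rw [Walk.length_cons]
    simp only [sub_val'] at hadj ih ⊢
    have h1 := a.isLt; have h2 := b.isLt; have h3 := r.isLt
    split_ifs at hadj ih ⊢ <;> omega

lemma cycle_dist_le {n : ℕ} (x y : Fin (n+2)) :
    (cycleGraph (n+2)).dist x y ≤ (y - x).val := by
  suffices h : ∀ (m : ℕ) (x : Fin (n+2)), (y - x).val = m → (cycleGraph (n+2)).dist x y ≤ m by
    exact h _ x rfl
  intro m
  induction m with
  | zero =>
    intro x hm
    have : x = y := (sub_eq_zero.mp (Fin.ext hm)).symm
    subst this; simp
  | succ m ih =>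
    intro x hm
    have hadj : (cycleGraph (n+2)).Adj x (x + 1) := by
      rw [cycleGraph_adj']
      right
      have e : x + 1 - x = 1 := add_sub_cancel_left _ _
      simp [e]
    have h1 : (y - (x+1)).val = m := by
      have e : y - (x + 1) = (y - x) - 1 := sub_add_eq_sub_sub _ _ _
      rw [e, sub_val', Fin.val_one, if_pos (by omega)]
      omega
    calc (cycleGraph (n+2)).dist x y
        ≤ (cycleGraph (n+2)).dist x (x+1) + (cycleGraph (n+2)).dist (x+1) y :=
          (cycleGraph_connected).dist_triangle
      _ ≤ 1 + m := by
          refine Nat.add_le_add ?_ (ih _ h1)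
          simpa using SimpleGraph.dist_le hadj.toWalk
      _ = m + 1 := by omega

lemma cycle_dist_lower {n : ℕ} (x y : Fin (n+2)) :
    min (y - x).val (x - y).val ≤ (cycleGraph (n+2)).dist x y := by
  obtain ⟨p, hp⟩ := (cycleGraph_connected).exists_walk_length_eq_dist x y
  rw [← hp]; exact cycle_walk_lower p

lemma cycle_sum {n : ℕ} (x y z : Fin (n+2)) :
    (cycleGraph (n+2)).dist x y + (cycleGraph (n+2)).dist y z
      + (cycleGraph (n+2)).dist z x ≤ n + 2 := by
  have h1 := cycle_dist_le x y
  have h2 := cycle_dist_le y x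
  have h3 := cycle_dist_le y z
  have h4 := cycle_dist_le z y
  have h5 := cycle_dist_le z x
  have h6 := cycle_dist_le x z
  rw [SimpleGraph.dist_comm] at h2 h4 h6
  simp only [sub_val'] at h1 h2 h3 h4 h5 h6
  have e1 := x.isLt; have e2 := y.isLt; have e3 := z.isLt
  split_ifs at h1 h2 h3 h4 h5 h6 <;> omega

variable {α β : Type*} {G : SimpleGraph α} {H : SimpleGraph β}

lemma boxProd_walk_lower (hG : G.Connected) (hH : H.Connected) {x y : α × β}
    (p : (G □ H).Walk x y) : G.dist x.1 y.1 + H.dist x.2 y.2 ≤ p.length := by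
  induction p with
  | nil => simp
  | @cons a b r h q ih =>
    rw [Walk.length_cons]
    rcases boxProd_adj.mp h with ⟨ha, he⟩ | ⟨he2, ha2⟩
    · have t : G.dist a.1 r.1 ≤ G.dist a.1 b.1 + G.dist b.1 r.1 := hG.dist_triangle
      have hd : G.dist a.1 b.1 ≤ 1 := by simpa using SimpleGraph.dist_le ha.toWalk
      rw [← he] at ih
      omega
    · have t : H.dist a.2 r.2 ≤ H.dist a.2 b.2 + H.dist b.2 r.2 := hH.dist_triangle
      have hd : H.dist a.2 b.2 ≤ 1 := by simpa using SimpleGraph.dist_le he2.toWalk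
      rw [← ha2] at ih
      omega


lemma boxProd_dist_lower (hG : G.Connected) (hH : H.Connected) (x y : α × β) :
    G.dist x.1 y.1 + H.dist x.2 y.2 ≤ (G □ H).dist x y := by
  obtain ⟨p, hp⟩ := (hG.boxProd hH).exists_walk_length_eq_dist x y
  rw [← hp]; exact boxProd_walk_lower hG hH p

lemma boxProd_dist_le (hG : G.Connected) (hH : H.Connected) (x y : α × β) :
    (G □ H).dist x y ≤ G.dist x.1 y.1 + H.dist x.2 y.2 := by
  obtain ⟨x1, x2⟩ := x
  obtain ⟨y1, y2⟩ := y
  obtain ⟨p, hp⟩ := hG.exists_walk_length_eq_dist x1 y1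
  obtain ⟨q, hq⟩ := hH.exists_walk_length_eq_dist x2 y2
  have := SimpleGraph.dist_le ((p.boxProdLeft H x2).append (q.boxProdRight G y1))
  have e1 : (p.boxProdLeft H x2).length = p.length := by unfold Walk.boxProdLeft; exact Walk.length_map ..
  have e2 : (q.boxProdRight G y1).length = q.length := by unfold Walk.boxProdRight; exact Walk.length_map ..
  rw [Walk.length_append, e1, e2, hp, hq] at this
  exact this

/-- for `n = 2k + 1`, `k ≥ 1`, any radio labeling `c` of `C_n □ C_n` and vertices
`u, v, w` with `c u < c v < c w` satisfy `c w - c u ≥ k + 1`. -/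
theorem gap_every_other_label_odd (n k : ℕ) (hk : 1 ≤ k) (hn : n = 2 * k + 1)
    (c : Fin n × Fin n → ℕ) (hc : IsRadioLabeling (cycleGraph n □ cycleGraph n) c)
    (u v w : Fin n × Fin n) (huv : c u < c v) (hvw : c v < c w) :
    k + 1 ≤ c w - c u := by
  obtain ⟨m, rfl⟩ : ∃ m, n = m + 2 := ⟨n - 2, by omega⟩
  have hconn : (cycleGraph (m+2)).Connected := cycleGraph_connected
  have hGconn := hconn.boxProd hconn
  -- the extended diameter is finite
  have htop : (cycleGraph (m+2) □ cycleGraph (m+2)).ediam ≠ ⊤ := by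
    obtain ⟨a, b, hab⟩ :=
      exists_edist_eq_ediam_of_finite (G := cycleGraph (m+2) □ cycleGraph (m+2))
    rw [← hab]
    exact edist_ne_top_iff_reachable.mpr (hGconn.preconnected a b)
  -- the diameter is at least 2k
  have hkm : k < m + 2 := by omega
  have hcd : k ≤ (cycleGraph (m+2)).dist 0 ⟨k, hkm⟩ := by
    have h := cycle_dist_lower (0 : Fin (m+2)) ⟨k, hkm⟩
    simp only [sub_val'] at h
    rw [Fin.val_zero] at h
    split_ifs at h <;> omega
  have hdl := boxProd_dist_lower hconn hconn ((0, 0) : Fin (m+2) × Fin (m+2))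
    ((⟨k, hkm⟩, ⟨k, hkm⟩) : Fin (m+2) × Fin (m+2))
  have hdiam : 2 * k ≤ (cycleGraph (m+2) □ cycleGraph (m+2)).diam := by
    have := dist_le_diam htop (u := ((0, 0) : Fin (m+2) × Fin (m+2)))
      (v := ((⟨k, hkm⟩, ⟨k, hkm⟩) : Fin (m+2) × Fin (m+2)))
    simp only at hdl
    omega
  -- distinctness
  have hne_uv : u ≠ v := fun h => by rw [h] at huv; omega
  have hne_vw : v ≠ w := fun h => by rw [h] at hvw; omega
  have hne_uw : u ≠ w := fun h => by rw [h] at huv; omega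
  -- radio conditions
  have r1 := hc.2 u v hne_uv
  have r2 := hc.2 v w hne_vw
  have r3 := hc.2 u w hne_uw
  rw [Nat.dist_eq_sub_of_le huv.le] at r1
  rw [Nat.dist_eq_sub_of_le hvw.le] at r2
  rw [Nat.dist_eq_sub_of_le (huv.trans hvw).le] at r3
  -- distance sum bounds
  have b1 := boxProd_dist_le hconn hconn u v
  have b2 := boxProd_dist_le hconn hconn v w
  have b3 := boxProd_dist_le hconn hconn u w
  have s1 := cycle_sum u.1 v.1 w.1
  have s2 := cycle_sum u.2 v.2 w.2
  rw [SimpleGraph.dist_comm (u := w.1) (v := u.1)] at s1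
  rw [SimpleGraph.dist_comm (u := w.2) (v := u.2)] at s2
  omega
end

section
/- Let k ≥ 1 and n = 2k + 1. Then the radio number of C_n □ C_n satisfies rn(C_n □ C_n) ≤ ((n² − 1)/2)·(k + 1) + 1; that is, there exists a radio labeling of C_n □ C_n whose span equals ((n² − 1)/2)·(k + 1) + 1. -/
open SimpleGraph

open SimpleGraph
open Fin.NatCast Fin.CommRing

section Helpers

variable {V W : Type*}

lemma lipschitz_walk (G : SimpleGraph V) (f : V → ℕ)
    (hf : ∀ x y, G.Adj x y → f y ≤ f x + 1) :
    ∀ {u v : V} (p : G.Walk u v), f v ≤ f u + p.length := by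
  intro u v p
  induction p with
  | nil => simp
  | cons h p ih =>
    calc f _ ≤ _ + p.length := ih
    _ ≤ (f _ + 1) + p.length := by gcongr; exact hf _ _ h
    _ = f _ + (p.cons h).length := by simp [Walk.length_cons]; ring

lemma lipschitz_dist (G : SimpleGraph V) (f : V → ℕ)
    (hf : ∀ x y, G.Adj x y → f y ≤ f x + 1) {u v : V} (h : G.Reachable u v) :
    f v ≤ f u + G.dist u v := by
  obtain ⟨p, hp⟩ := h.exists_walk_length_eq_dist
  simpa [hp] using lipschitz_walk G f hf p

lemma boxProd_walk_ge (G : SimpleGraph V) (H : SimpleGraph W)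
    (hG : G.Connected) (hH : H.Connected) :
    ∀ {x y : V × W} (p : (G □ H).Walk x y),
      G.dist x.1 y.1 + H.dist x.2 y.2 ≤ p.length := by
  intro x y p
  induction p with
  | nil => simp
  | @cons a b c h p ih =>
    rw [boxProd_adj] at h
    rw [Walk.length_cons]
    rcases h with ⟨h1, h2⟩ | ⟨h1, h2⟩
    · have t1 : G.dist a.1 c.1 ≤ 1 + G.dist b.1 c.1 := by
        calc G.dist a.1 c.1 ≤ G.dist a.1 b.1 + G.dist b.1 c.1 := hG.dist_triangle
        _ ≤ 1 + G.dist b.1 c.1 := by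
            gcongr
            simpa using SimpleGraph.dist_le h1.toWalk
      rw [h2]
      omega
    · have t1 : H.dist a.2 c.2 ≤ 1 + H.dist b.2 c.2 := by
        calc H.dist a.2 c.2 ≤ H.dist a.2 b.2 + H.dist b.2 c.2 := hH.dist_triangle
        _ ≤ 1 + H.dist b.2 c.2 := by
            gcongr
            simpa using SimpleGraph.dist_le h1.toWalk
      rw [h2]
      omega

lemma boxProd_dist (G : SimpleGraph V) (H : SimpleGraph W)
    (hG : G.Connected) (hH : H.Connected) (x y : V × W) :
    (G □ H).dist x y = G.dist x.1 y.1 + H.dist x.2 y.2 := by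
  apply le_antisymm
  · obtain ⟨p, hp⟩ := (hG x.1 y.1).exists_walk_length_eq_dist
    obtain ⟨q, hq⟩ := (hH x.2 y.2).exists_walk_length_eq_dist
    have := SimpleGraph.dist_le ((p.boxProdLeft H x.2).append ((q.boxProdRight G y.1)))
    have hlen : ((p.boxProdLeft H x.2).append ((q.boxProdRight G y.1))).length
        = p.length + q.length := by
      rw [Walk.length_append]
      exact congrArg₂ (· + ·) (Walk.length_map _ _) (Walk.length_map _ _)
    rw [hlen] at this
    simpa [Walk.boxProdLeft, Walk.boxProdRight, Walk.length_map, hp, hq]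
      using this
  · obtain ⟨p, hp⟩ := ((hG.boxProd hH) x y).exists_walk_length_eq_dist
    rw [← hp]
    exact boxProd_walk_ge G H hG hH p

end Helpers

section Cycle

variable {n : ℕ} [NeZero n]

lemma cyc_adj (hn : 2 ≤ n) (a : Fin n) : (cycleGraph n).Adj a (a + 1) := by
  rw [cycleGraph_adj']
  right
  rw [add_sub_cancel_left, Fin.val_one', Nat.mod_eq_of_lt hn]

lemma cyc_connected (hn : 2 ≤ n) : (cycleGraph n).Connected := by
  haveI : Nonempty (Fin n) := ⟨0⟩
  exact Connected.mk cycleGraph_preconnected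

lemma cyc_dist_le (hn : 2 ≤ n) (a : Fin n) (m : ℕ) :
    (cycleGraph n).dist a (a + (m : Fin n)) ≤ m := by
  induction m with
  | zero => simp
  | succ m ih =>
    have h1 : (((m+1 : ℕ)) : Fin n) = (m : Fin n) + 1 := by push_cast; ring
    rw [h1, ← add_assoc]
    calc (cycleGraph n).dist a (a + (m:Fin n) + 1)
        ≤ (cycleGraph n).dist a (a + (m:Fin n)) +
          (cycleGraph n).dist (a + (m:Fin n)) (a + (m:Fin n) + 1) :=
          (cyc_connected hn).dist_triangle
      _ ≤ m + 1 := by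
          have := SimpleGraph.dist_le (cyc_adj hn (a + (m:Fin n))).toWalk
          simp only [Walk.length_cons, Walk.length_nil] at this
          omega

lemma cyc_g_step (hn : 2 ≤ n) (e : Fin n) :
    min (e+1).val (-(e+1)).val ≤ min e.val (-e).val + 1 ∧
    min e.val (-e).val ≤ min (e+1).val (-(e+1)).val + 1 := by
  have h1 : (e+1).val = (e.val + 1) % n := by
    rw [Fin.val_add, Fin.val_one', Nat.mod_eq_of_lt hn]
  have h2 : (-(e+1)).val = (n - (e+1).val) % n := rfl
  have h3 : (-e).val = (n - e.val) % n := rfl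
  have he : e.val < n := e.isLt
  rcases Nat.lt_or_ge (e.val + 1) n with h | h
  · rw [Nat.mod_eq_of_lt h] at h1
    rw [h1] at h2
    rw [h2, h3]
    have hm1 : (n - (e.val+1)) % n = n - (e.val + 1) := Nat.mod_eq_of_lt (by omega)
    rw [hm1]
    rcases Nat.eq_or_lt_of_le (Nat.zero_le e.val) with hz | hz
    · rw [← hz]
      simp only [Nat.sub_zero, Nat.mod_self]
      omega
    · have : (n - e.val) % n = n - e.val := Nat.mod_eq_of_lt (by omega)
      rw [this]; omega
  · have hev : e.val = n - 1 := by omega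
    have hmod : (e.val + 1) % n = 0 := by
      have : e.val + 1 = n := by omega
      rw [this, Nat.mod_self]
    rw [hmod] at h1
    rw [h1] at h2
    simp only [Nat.sub_zero, Nat.mod_self] at h2
    rw [h2, h3, hev]
    have : (n - (n-1)) % n = 1 % n := by congr 1; omega
    rw [this, Nat.mod_eq_of_lt hn]
    omega

lemma cycleGraph_dist_eq (hn : 2 ≤ n) (a b : Fin n) :
    (cycleGraph n).dist a b = min (b - a).val (a - b).val := by
  apply le_antisymm
  · rcases le_total ((b-a).val) ((a-b).val) with h | h
    · rw [min_eq_left h]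
      have := cyc_dist_le hn a (b-a).val
      rwa [Fin.cast_val_eq_self, add_sub_cancel] at this
    · rw [min_eq_right h, SimpleGraph.dist_comm]
      have := cyc_dist_le hn b (a-b).val
      rwa [Fin.cast_val_eq_self, add_sub_cancel] at this
  · have key := lipschitz_dist (cycleGraph n)
      (fun x => min (x - a).val (a - x).val)
      (by
        intro x y hadj
        rw [cycleGraph_adj'] at hadj
        have hyx : y = x + 1 ∨ x = y + 1 := by
          rcases hadj with h | h
          · right
            have hv : x - y = (1 : Fin n) := by
              apply Fin.ext
              rw [h, Fin.val_one', Nat.mod_eq_of_lt hn]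
            have := sub_eq_iff_eq_add.mp hv
            rw [this]; ring
          · left
            have hv : y - x = (1 : Fin n) := by
              apply Fin.ext
              rw [h, Fin.val_one', Nat.mod_eq_of_lt hn]
            have := sub_eq_iff_eq_add.mp hv
            rw [this]; ring
        have hneg : ∀ z : Fin n, a - z = -(z - a) := by intro z; ring
        rcases hyx with rfl | rfl
        · have := (cyc_g_step hn (x - a)).1
          simp only [hneg]
          convert this using 3 <;> ring
        · have := (cyc_g_step hn (y - a)).2
          simp only [hneg]
          convert this using 3 <;> ring)
      ((cyc_connected hn) a b)
    simpa [sub_self] using key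

end Cycle

section Torus

variable {k : ℕ}

abbrev fnorm {n : ℕ} (a b : Fin n) : ℕ := min (b - a).val (a - b).val

lemma fnorm_le (hk : 1 ≤ k) (a b : Fin (2*k+1)) : fnorm a b ≤ k := by
  have h1 : (a - b) = -(b - a) := by ring
  have h2 : (a - b).val = (2*k+1 - (b-a).val) % (2*k+1) := by rw [h1]; rfl
  have hlt : (b-a).val < 2*k+1 := (b-a).isLt
  rcases Nat.eq_zero_or_pos (b-a).val with hz | hz
  · have : fnorm a b = min (b-a).val (a-b).val := rfl
    rw [this, hz]
    simp
  · have : fnorm a b = min (b-a).val (a-b).val := rfl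
    rw [this, h2, Nat.mod_eq_of_lt (by omega)]
    omega

lemma CC_dist (hk : 1 ≤ k) (x y : Fin (2*k+1) × Fin (2*k+1)) :
    (cycleGraph (2*k+1) □ cycleGraph (2*k+1)).dist x y =
      fnorm x.1 y.1 + fnorm x.2 y.2 := by
  haveI : NeZero (2*k+1) := ⟨by omega⟩
  have hn : 2 ≤ 2*k+1 := by omega
  rw [boxProd_dist _ _ (cyc_connected hn) (cyc_connected hn),
    cycleGraph_dist_eq hn, cycleGraph_dist_eq hn]

lemma CC_connected (hk : 1 ≤ k) :
    (cycleGraph (2*k+1) □ cycleGraph (2*k+1)).Connected := by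
  haveI : NeZero (2*k+1) := ⟨by omega⟩
  exact (cyc_connected (by omega)).boxProd (cyc_connected (by omega))

lemma CC_diam (hk : 1 ≤ k) :
    (cycleGraph (2*k+1) □ cycleGraph (2*k+1)).diam = 2*k := by
  haveI : NeZero (2*k+1) := ⟨by omega⟩
  have hub : ∀ x y, (cycleGraph (2*k+1) □ cycleGraph (2*k+1)).dist x y ≤ 2*k := by
    intro x y
    rw [CC_dist hk]
    have := fnorm_le hk x.1 y.1
    have := fnorm_le hk x.2 y.2
    omega
  have hne : (cycleGraph (2*k+1) □ cycleGraph (2*k+1)).ediam ≠ ⊤ := by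
    obtain ⟨u, v, huv⟩ := exists_edist_eq_ediam_of_finite
      (G := cycleGraph (2*k+1) □ cycleGraph (2*k+1))
    rw [← huv]
    exact edist_ne_top_iff_reachable.mpr ((CC_connected hk) u v)
  apply le_antisymm
  · obtain ⟨u, v, huv⟩ := exists_dist_eq_diam
      (G := cycleGraph (2*k+1) □ cycleGraph (2*k+1))
    rw [← huv]
    exact hub u v
  · have hpair : (cycleGraph (2*k+1) □ cycleGraph (2*k+1)).dist
        ((0 : Fin (2*k+1)), (0 : Fin (2*k+1))) ((k : Fin (2*k+1)), (k : Fin (2*k+1))) = 2*k := by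
      rw [CC_dist hk]
      have h1 : ((k : Fin (2*k+1)) - 0).val = k := by
        simp [Fin.val_natCast, Nat.mod_eq_of_lt (by omega : k < 2*k+1)]
      have h2 : ((0 : Fin (2*k+1)) - (k : Fin (2*k+1))).val = k+1 := by
        rw [Fin.sub_def]
        simp [Fin.val_natCast, Nat.mod_eq_of_lt (by omega : k < 2*k+1)]
        rw [Nat.mod_eq_of_lt (by omega)]
        omega
      simp only [fnorm, h1, h2]
      omega
    calc 2*k = _ := hpair.symm
    _ ≤ _ := dist_le_diam hne
end Torus
section Assembly

lemma fnorm_comm {n : ℕ} (a b : Fin n) : fnorm a b = fnorm b a := min_comm _ _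

lemma exists_radio_labeling (k : ℕ) (hk : 1 ≤ k)
    (x : Fin ((2*k+1)^2) → Fin (2*k+1) × Fin (2*k+1))
    (hbij : Function.Bijective x)
    (hcond : ∀ i j : Fin ((2*k+1)^2), (i:ℕ) < (j:ℕ) →
      2*k+1 ≤ fnorm (x i).1 (x j).1 + fnorm (x i).2 (x j).2
        + (((j:ℕ)*(k+1)+1)/2 - ((i:ℕ)*(k+1)+1)/2)) :
    ∃ c : Fin (2*k+1) × Fin (2*k+1) → ℕ,
      IsRadioLabeling (cycleGraph (2*k+1) □ cycleGraph (2*k+1)) c ∧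
      labelSpan c = ((2*k+1)^2 - 1)/2 * (k+1) + 1 := by
  have hNpos : 0 < (2*k+1)^2 := by positivity
  let e := Equiv.ofBijective x hbij
  let g : Fin ((2*k+1)^2) → ℕ := fun i => 1 + ((i:ℕ)*(k+1)+1)/2
  refine ⟨fun v => g (e.symm v), ?_, ?_⟩
  · constructor
    · intro v; exact Nat.le_add_right 1 _
    · intro u v huv
      have hdiam : (cycleGraph (2*k+1) □ cycleGraph (2*k+1)).diam = 2*k := CC_diam hk
      rw [hdiam, CC_dist hk]
      set i := e.symm u with hi
      set j := e.symm v with hj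
      have hu : u = x i := (e.apply_symm_apply u).symm
      have hv : v = x j := (e.apply_symm_apply v).symm
      have hij : i ≠ j := fun h => huv (by rw [hu, hv, h])
      have hmono : ∀ p q : Fin ((2*k+1)^2), (p:ℕ) ≤ (q:ℕ) → g p ≤ g q := by
        intro p q hpq
        have : (p:ℕ)*(k+1) ≤ (q:ℕ)*(k+1) := Nat.mul_le_mul_right _ hpq
        exact Nat.add_le_add_left (Nat.div_le_div_right (by omega)) 1
      have hsymm : ∀ p : Fin ((2*k+1)^2), e.symm (x p) = p := fun p => e.symm_apply_apply p
      rcases lt_trichotomy ((i:ℕ)) ((j:ℕ)) with hlt | heq | hgt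
      · have hc := hcond i j hlt
        have hd : Nat.dist (g i) (g j) = ((j:ℕ)*(k+1)+1)/2 - ((i:ℕ)*(k+1)+1)/2 := by
          rw [Nat.dist_eq_sub_of_le (hmono i j (le_of_lt hlt))]
          simp only [g]
          omega
        rw [hu, hv]
        simp only [hsymm]
        rw [hd]
        omega
      · exact absurd (Fin.ext heq) hij
      · have hc := hcond j i hgt
        have hd : Nat.dist (g i) (g j) = ((i:ℕ)*(k+1)+1)/2 - ((j:ℕ)*(k+1)+1)/2 := by
          rw [Nat.dist_comm, Nat.dist_eq_sub_of_le (hmono j i (le_of_lt hgt))]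
          simp only [g]
          omega
        rw [hu, hv]
        simp only [hsymm]
        rw [hd, fnorm_comm (x i).1 (x j).1, fnorm_comm (x i).2 (x j).2]
        omega
  · -- span
    have hsup : labelSpan (fun v => g (e.symm v)) = Finset.univ.sup g := by
      rw [labelSpan]
      have : (Finset.univ.sup fun v => g (e.symm v)) = (Finset.univ.image e.symm).sup g := by
        rw [Finset.sup_image]
        rfl
      rw [this, Finset.image_univ_equiv e.symm]
    rw [hsup]
    have hlast : Finset.univ.sup g = g ⟨((2*k+1)^2)-1, by omega⟩ := by
      apply le_antisymm
      · apply Finset.sup_le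
        intro i _
        apply (by
          intro p q hpq
          have : (p:ℕ)*(k+1) ≤ (q:ℕ)*(k+1) := Nat.mul_le_mul_right _ hpq
          exact Nat.add_le_add_left (Nat.div_le_div_right (by omega)) 1 :
            ∀ p q : Fin ((2*k+1)^2), (p:ℕ) ≤ (q:ℕ) → g p ≤ g q)
        simp only []
        omega
      · exact Finset.le_sup (Finset.mem_univ _)
    rw [hlast]
    have hsq : (2*k+1)^2 = 4*(k*k)+4*k+1 := by ring
    have h2 : (((2*k+1)^2) - 1)/2 = 2*(k*k)+2*k := by omega
    have h3 : (((2*k+1)^2)-1)*(k+1) = 2*((2*(k*k)+2*k)*(k+1)) := by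
      have h4 : ((2*k+1)^2) - 1 = 2*(2*(k*k)+2*k) := by omega
      rw [h4]; ring
    simp only [g, h2]
    rw [h3]
    omega

end Assembly


section General

/-- the vertex ordering for the general case `k ≥ 3` -/
def xgen (k : ℕ) (i : Fin ((2*k+1)^2)) : Fin (2*k+1) × Fin (2*k+1) :=
  (((k/2+1) * (i:ℕ) + (i:ℕ)/(2*k+1) : ℕ), ((k * (i:ℕ) + 2*k*((i:ℕ)/(2*k+1)) : ℕ)))

lemma mod3_char (n m : ℕ) (hn : 0 < n) (h : m < 3*n) :
    m % n < n ∧ (m % n = m ∨ m % n + n = m ∨ m % n + 2*n = m) := by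
  refine ⟨Nat.mod_lt _ hn, ?_⟩
  rcases Nat.lt_or_ge m n with h1 | h1
  · left; exact Nat.mod_eq_of_lt h1
  rcases Nat.lt_or_ge m (2*n) with h2 | h2
  · right; left
    rw [Nat.mod_eq_sub_mod h1, Nat.mod_eq_of_lt (by omega)]
    omega
  · right; right
    rw [Nat.mod_eq_sub_mod h1, Nat.mod_eq_sub_mod (by omega), Nat.mod_eq_of_lt (by omega)]
    omega

lemma fnorm_cast (n : ℕ) [NeZero n] (A D : ℕ) :
    fnorm ((A : Fin n)) (((A + D : ℕ) : Fin n)) = min (D % n) (n - D % n) := by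
  have hn : 0 < n := Nat.pos_of_ne_zero (NeZero.ne n)
  have h1 : ((A + D : ℕ) : Fin n) - (A : Fin n) = ((D:ℕ) : Fin n) := by push_cast; ring
  have h2 : (A : Fin n) - ((A + D : ℕ) : Fin n) = -((D:ℕ) : Fin n) := by push_cast; ring
  have hv1 : (((A + D : ℕ) : Fin n) - (A : Fin n)).val = D % n := by rw [h1, Fin.val_natCast]
  have hv2 : ((A : Fin n) - ((A + D : ℕ) : Fin n)).val = (n - D % n) % n := by
    rw [h2]; rfl
  show min _ _ = _
  rw [hv1, hv2]
  rcases Nat.eq_zero_or_pos (D % n) with h0 | h0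
  · rw [h0]; simp [Nat.mod_self]
  · have hlt : D % n < n := Nat.mod_lt D hn
    rw [Nat.mod_eq_of_lt (by omega : n - D % n < n)]

lemma xgen_inj (k : ℕ) (hk : 1 ≤ k) : Function.Injective (xgen k) := by
  haveI : NeZero (2*k+1) := ⟨by omega⟩
  intro i j hx
  have hn1 : 1 ≤ 2*k+1 := by omega
  have hilt : (i:ℕ) < (2*k+1)^2 := i.isLt
  have hjlt : (j:ℕ) < (2*k+1)^2 := j.isLt
  have hn0 : (((2*k+1) : ℕ) : Fin (2*k+1)) = 0 := Fin.natCast_self (2*k+1)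
  have hn0' : 2*((k:ℕ) : Fin (2*k+1)) + 1 = 0 := by
    rw [← hn0]; push_cast; ring
  have e1 : (((k/2+1) * (i:ℕ) + (i:ℕ)/(2*k+1) : ℕ) : Fin (2*k+1))
      = (((k/2+1) * (j:ℕ) + (j:ℕ)/(2*k+1) : ℕ) : Fin (2*k+1)) := congrArg Prod.fst hx
  have e2 : ((k * (i:ℕ) + 2*k*((i:ℕ)/(2*k+1)) : ℕ) : Fin (2*k+1))
      = ((k * (j:ℕ) + 2*k*((j:ℕ)/(2*k+1)) : ℕ) : Fin (2*k+1)) := congrArg Prod.snd hx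
  push_cast at e1 e2
  set M : Fin (2*k+1) := ((k/2 : ℕ) : Fin (2*k+1)) with hM
  set K : Fin (2*k+1) := ((k : ℕ) : Fin (2*k+1)) with hK
  set A : Fin (2*k+1) := (((i:ℕ) : ℕ) : Fin (2*k+1)) with hA
  set B : Fin (2*k+1) := (((j:ℕ) : ℕ) : Fin (2*k+1)) with hB
  set Q : Fin (2*k+1) := (((i:ℕ)/(2*k+1) : ℕ) : Fin (2*k+1)) with hQ
  set R : Fin (2*k+1) := (((j:ℕ)/(2*k+1) : ℕ) : Fin (2*k+1)) with hR
  have e3 : ((M+1) + K) * A = ((M+1) + K) * B := by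
    linear_combination e1 + e2 + (R - Q) * hn0'
  have e4 : (4*((M+1) + K)) * A = (4*((M+1) + K)) * B := by linear_combination 4*e3
  have hunit : 4*((M+1) + K) = 1 ∨ 4*((M+1) + K) = -1 := by
    rcases Nat.even_or_odd k with ⟨a, ha⟩ | ⟨a, ha⟩
    · left
      have hMv : k/2 = a := by omega
      have : (4:Fin (2*k+1))*((M+1) + K) = ((4*(a+1) + 4*k : ℕ) : Fin (2*k+1)) := by
        rw [hM, hMv, hK]; push_cast; ring
      rw [this, show 4*(a+1)+4*k = 3*(2*k+1)+1 by omega]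
      push_cast [hn0]
      ring
    · right
      have hMv : k/2 = a := by omega
      have : (4:Fin (2*k+1))*((M+1) + K) = ((4*(a+1) + 4*k : ℕ) : Fin (2*k+1)) := by
        rw [hM, hMv, hK]; push_cast; ring
      rw [this, show 4*(a+1)+4*k = 3*(2*k+1) - 1 by omega]
      have h9 : ((3*(2*k+1) - 1 : ℕ) : Fin (2*k+1))
          = ((3*(2*k+1) : ℕ) : Fin (2*k+1)) - ((1:ℕ) : Fin (2*k+1)) := by
        rw [Nat.cast_sub (by omega)]
      rw [h9]
      push_cast [hn0]
      ring
  have eAB : A = B := by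
    rcases hunit with hu | hu
    · rw [hu, one_mul, one_mul] at e4; exact e4
    · rw [hu, neg_one_mul, neg_one_mul] at e4
      exact neg_injective e4
  have eQR : Q = R := by linear_combination e1 - (M+1) * eAB
  have hvA : (i:ℕ) % (2*k+1) = (j:ℕ) % (2*k+1) := by
    have := congrArg Fin.val eAB
    rwa [hA, hB, Fin.val_natCast, Fin.val_natCast] at this
  have hvQ : (i:ℕ)/(2*k+1) = (j:ℕ)/(2*k+1) := by
    have := congrArg Fin.val eQR
    rw [hQ, hR, Fin.val_natCast, Fin.val_natCast] at this
    have hqi : (i:ℕ)/(2*k+1) < 2*k+1 := by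
      apply Nat.div_lt_of_lt_mul
      calc (i:ℕ) < (2*k+1)^2 := hilt
      _ = (2*k+1)*(2*k+1) := sq (2*k+1)
    have hqj : (j:ℕ)/(2*k+1) < 2*k+1 := by
      apply Nat.div_lt_of_lt_mul
      calc (j:ℕ) < (2*k+1)^2 := hjlt
      _ = (2*k+1)*(2*k+1) := sq (2*k+1)
    rwa [Nat.mod_eq_of_lt hqi, Nat.mod_eq_of_lt hqj] at this
  apply Fin.ext
  rw [← Nat.div_add_mod (i:ℕ) (2*k+1), ← Nat.div_add_mod (j:ℕ) (2*k+1), hvA, hvQ]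

end General

lemma xgen_card (k : ℕ) (hk : 1 ≤ k) : Function.Bijective (xgen k) := by
  rw [Fintype.bijective_iff_injective_and_card]
  refine ⟨xgen_inj k hk, ?_⟩
  simp [sq]

lemma core_ineq (k s w : ℕ) (hk : 3 ≤ k) (hs1 : 1 ≤ s) (hs3 : s ≤ 3) (hw : w ≤ 1) :
    2*k+1 ≤ min (((k/2+1)*s + w) % (2*k+1)) ((2*k+1) - ((k/2+1)*s + w) % (2*k+1))
        + min ((k*s + 2*k*w) % (2*k+1)) ((2*k+1) - (k*s + 2*k*w) % (2*k+1))
        + (s*(k+1))/2 := by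
  have hnpos : 0 < 2*k+1 := by omega
  have hb1 : (k/2+1)*s ≤ (k/2+1)*3 := Nat.mul_le_mul_left _ hs3
  have hb2 : k*s ≤ k*3 := Nat.mul_le_mul_left _ hs3
  have hb3 : 2*k*w ≤ 2*k*1 := Nat.mul_le_mul_left _ hw
  have hc1 := mod3_char (2*k+1) ((k/2+1)*s + w) hnpos (by omega)
  have hc2 := mod3_char (2*k+1) (k*s + 2*k*w) hnpos (by omega)
  interval_cases s <;> interval_cases w <;> omega

lemma xgen_cond (k : ℕ) (hk : 3 ≤ k) :
    ∀ i j : Fin ((2*k+1)^2), (i:ℕ) < (j:ℕ) →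
      2*k+1 ≤ fnorm (xgen k i).1 (xgen k j).1 + fnorm (xgen k i).2 (xgen k j).2
        + (((j:ℕ)*(k+1)+1)/2 - ((i:ℕ)*(k+1)+1)/2) := by
  haveI : NeZero (2*k+1) := ⟨by omega⟩
  intro i j hij
  have hnpos : 0 < 2*k+1 := by omega
  have hmul : (j:ℕ)*(k+1) = (i:ℕ)*(k+1) + ((j:ℕ)-(i:ℕ))*(k+1) := by
    rw [← Nat.add_mul, Nat.add_sub_cancel' (le_of_lt hij)]
  have hdiff : (((j:ℕ)-(i:ℕ))*(k+1))/2 ≤ ((j:ℕ)*(k+1)+1)/2 - ((i:ℕ)*(k+1)+1)/2 := by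
    omega
  by_cases hs4 : 4 ≤ (j:ℕ) - (i:ℕ)
  · have h4 : 4*(k+1) ≤ ((j:ℕ)-(i:ℕ))*(k+1) := Nat.mul_le_mul_right _ hs4
    omega
  · -- s ∈ {1,2,3}
    have hs : (j:ℕ) - (i:ℕ) = 1 ∨ (j:ℕ) - (i:ℕ) = 2 ∨ (j:ℕ) - (i:ℕ) = 3 := by omega
    -- quotient step
    have hqle : (i:ℕ)/(2*k+1) ≤ (j:ℕ)/(2*k+1) := Nat.div_le_div_right (le_of_lt hij)
    have hqle2 : (j:ℕ)/(2*k+1) ≤ (i:ℕ)/(2*k+1) + 1 := by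
      have h1 : (j:ℕ) ≤ (i:ℕ) + (2*k+1) := by omega
      have h2 : (j:ℕ)/(2*k+1) ≤ ((i:ℕ) + (2*k+1))/(2*k+1) := Nat.div_le_div_right h1
      rwa [Nat.add_div_right _ hnpos] at h2
    have hw : (j:ℕ)/(2*k+1) - (i:ℕ)/(2*k+1) = 0 ∨ (j:ℕ)/(2*k+1) - (i:ℕ)/(2*k+1) = 1 := by
      omega
    -- decompositions
    have haj : (j:ℕ) = (i:ℕ) + ((j:ℕ)-(i:ℕ)) := by omega
    have hqj : (j:ℕ)/(2*k+1) = (i:ℕ)/(2*k+1) + ((j:ℕ)/(2*k+1) - (i:ℕ)/(2*k+1)) := by omega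
    set s := (j:ℕ) - (i:ℕ) with hsdef
    set w := (j:ℕ)/(2*k+1) - (i:ℕ)/(2*k+1) with hwdef
    have hD1 : (k/2+1)*(j:ℕ) + (j:ℕ)/(2*k+1)
        = ((k/2+1)*(i:ℕ) + (i:ℕ)/(2*k+1)) + ((k/2+1)*s + w) := by
      have : (k/2+1)*(j:ℕ) = (k/2+1)*(i:ℕ) + (k/2+1)*s := by
        conv_lhs => rw [haj]
        ring
      omega
    have hD2 : k*(j:ℕ) + 2*k*((j:ℕ)/(2*k+1))
        = (k*(i:ℕ) + 2*k*((i:ℕ)/(2*k+1))) + (k*s + 2*k*w) := by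
      have h1 : k*(j:ℕ) = k*(i:ℕ) + k*s := by
        conv_lhs => rw [haj]
        ring
      have h2 : 2*k*((j:ℕ)/(2*k+1)) = 2*k*((i:ℕ)/(2*k+1)) + 2*k*w := by
        conv_lhs => rw [hqj]
        ring
      omega
    have hF1 : fnorm (xgen k i).1 (xgen k j).1
        = min (((k/2+1)*s + w) % (2*k+1)) ((2*k+1) - ((k/2+1)*s + w) % (2*k+1)) := by
      have hxj : (xgen k j).1
          = (((((k/2+1)*(i:ℕ) + (i:ℕ)/(2*k+1)) + ((k/2+1)*s + w)) : ℕ) : Fin (2*k+1)) := by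
        rw [show (xgen k j).1 = (((k/2+1)*(j:ℕ) + (j:ℕ)/(2*k+1) : ℕ) : Fin (2*k+1)) from rfl,
          hD1]
      rw [show (xgen k i).1 = (((k/2+1)*(i:ℕ) + (i:ℕ)/(2*k+1) : ℕ) : Fin (2*k+1)) from rfl,
        hxj, fnorm_cast]
    have hF2 : fnorm (xgen k i).2 (xgen k j).2
        = min ((k*s + 2*k*w) % (2*k+1)) ((2*k+1) - (k*s + 2*k*w) % (2*k+1)) := by
      have hxj : (xgen k j).2
          = ((((k*(i:ℕ) + 2*k*((i:ℕ)/(2*k+1))) + (k*s + 2*k*w)) : ℕ) : Fin (2*k+1)) := by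
        rw [show (xgen k j).2 = ((k*(j:ℕ) + 2*k*((j:ℕ)/(2*k+1)) : ℕ) : Fin (2*k+1)) from rfl,
          hD2]
      rw [show (xgen k i).2 = ((k*(i:ℕ) + 2*k*((i:ℕ)/(2*k+1)) : ℕ) : Fin (2*k+1)) from rfl,
        hxj, fnorm_cast]
    rw [hF1, hF2]
    have hcore := core_ineq k s w hk (by omega) (by omega) (by omega)
    omega
section Small

def xone : Fin ((2*1+1)^2) → Fin (2*1+1) × Fin (2*1+1) :=
  fun i => ((((i:ℕ) : ℕ) : Fin 3), ((((i:ℕ) + (i:ℕ)/3) : ℕ) : Fin 3))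

def xtwoList : Fin 25 → Fin 5 × Fin 5 :=
  ![(0,0),(1,2),(3,0),(0,1),(2,3),(0,4),(2,1),(0,2),(3,4),(1,0),(3,2),(1,3),(4,0),
    (3,3),(1,1),(4,2),(2,4),(0,3),(3,1),(4,4),(2,2),(1,4),(4,1),(2,0),(4,3)]

def xtwo : Fin ((2*2+1)^2) → Fin (2*2+1) × Fin (2*2+1) :=
  fun i => xtwoList (Fin.cast (by norm_num) i)

lemma xone_bij : Function.Bijective xone := by decide
lemma xtwo_bij : Function.Bijective xtwo := by decide

lemma xone_cond : ∀ i j : Fin ((2*1+1)^2), (i:ℕ) < (j:ℕ) →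
    2*1+1 ≤ fnorm (xone i).1 (xone j).1 + fnorm (xone i).2 (xone j).2
      + (((j:ℕ)*(1+1)+1)/2 - ((i:ℕ)*(1+1)+1)/2) := by decide

lemma xtwo_cond : ∀ i j : Fin ((2*2+1)^2), (i:ℕ) < (j:ℕ) →
    2*2+1 ≤ fnorm (xtwo i).1 (xtwo j).1 + fnorm (xtwo i).2 (xtwo j).2
      + (((j:ℕ)*(2+1)+1)/2 - ((i:ℕ)*(2+1)+1)/2) := by decide

end Small

lemma main_k (k : ℕ) (hk : 1 ≤ k) :
    ∃ c : Fin (2*k+1) × Fin (2*k+1) → ℕ,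
      IsRadioLabeling (cycleGraph (2*k+1) □ cycleGraph (2*k+1)) c ∧
      labelSpan c = ((2*k+1)^2 - 1)/2 * (k+1) + 1 := by
  rcases Nat.lt_or_ge k 3 with h3 | h3
  · interval_cases k
    · exact exists_radio_labeling 1 (by norm_num) xone xone_bij xone_cond
    · exact exists_radio_labeling 2 (by norm_num) xtwo xtwo_bij xtwo_cond
  · exact exists_radio_labeling k hk (xgen k) (xgen_card k hk) (xgen_cond k h3)


/-- for `n = 2k + 1`, `k ≥ 1`, `rn(C_n □ C_n) ≤ ((n² - 1)/2)(k + 1) + 1`; indeed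
there is a radio labeling of `C_n □ C_n` whose span equals `((n² - 1)/2)(k + 1) + 1`. -/
theorem radioNumber_odd_upper_bound (n k : ℕ) (hk : 1 ≤ k) (hn : n = 2 * k + 1) :
    radioNumber (cycleGraph n □ cycleGraph n) ≤ (n ^ 2 - 1) / 2 * (k + 1) + 1 ∧
      ∃ c : Fin n × Fin n → ℕ, IsRadioLabeling (cycleGraph n □ cycleGraph n) c ∧
        labelSpan c = (n ^ 2 - 1) / 2 * (k + 1) + 1 := by
  subst hn
  obtain ⟨c, hc, hspan⟩ := main_k k hk
  constructor
  · apply Nat.sInf_le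
    exact ⟨c, hc, hspan⟩
  · exact ⟨c, hc, hspan⟩
end
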